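/- Let k ≥ 2, let M > 0 be real, let D_1, …, D_k ≥ 0 and m_1, …, m_k ≥ 0 be reals, and for i < j let e_{ij} ≥ 0 be reals; set D_c = Σ_{i=1}^k D_i and m_c = Σ_{i=1}^k m_i + Σ_{i<j} e_{ij}. After adding one new edge inside module X_1 (the graph now has M+1 edges, X_1 has m_1+1 internal edges and total degree D_1+2, and c has m_c+1 internal edges and total degree D_c+2), the split has strictly larger modularity contribution than the unsplit community, i.e. (m_c+1)/(M+1) − (D_c+2)^2/(4(M+1)^2) < (m_1+1)/(M+1) − (D_1+2)^2/(4(M+1)^2) + Σ_{i=2}^k ( m_i/(M+1) − D_i^2/(4(M+1)^2) ), if and only if Σ_{i<j} e_{ij} < ( 2(Σ_{i=1}^k D_i − D_1) + Σ_{i<j} D_i D_j ) / (2(M+1)). -/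

import Mathlib

open Finset

/-- Proposition 2 (split criterion after adding one new edge inside module
`X_1`, indexed here by `0`): the split has strictly larger modularity
contribution than the unsplit community iff the number of inter-module edges
is less than `(2(Σ_i D_i − D_1) + Σ_{i<j} D_i D_j) / (2(M+1))`. -/
lemma pair_sum_identity (k : ℕ) (D : Fin k → ℝ) :
    2 * ∑ p ∈ univ.filter (fun p : Fin k × Fin k => p.1 < p.2), D p.1 * D p.2
      + ∑ i, D i ^ 2 = (∑ i, D i) ^ 2 := by
  have hsq : (∑ i, D i) ^ 2 = ∑ p : Fin k × Fin k, D p.1 * D p.2 := by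
    rw [sq, Finset.sum_mul_sum, ← Finset.univ_product_univ, Finset.sum_product]
  have hsplit : (∑ p : Fin k × Fin k, D p.1 * D p.2)
      = (∑ p ∈ univ.filter (fun p : Fin k × Fin k => p.1 < p.2), D p.1 * D p.2)
      + (∑ p ∈ univ.filter (fun p : Fin k × Fin k => ¬ p.1 < p.2), D p.1 * D p.2) :=
    (Finset.sum_filter_add_sum_filter_not _ _ _).symm
  have hsplit2 : (∑ p ∈ univ.filter (fun p : Fin k × Fin k => ¬ p.1 < p.2), D p.1 * D p.2)
      = (∑ p ∈ (univ.filter (fun p : Fin k × Fin k => ¬ p.1 < p.2)).filter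
            (fun p => p.2 < p.1), D p.1 * D p.2)
      + (∑ p ∈ (univ.filter (fun p : Fin k × Fin k => ¬ p.1 < p.2)).filter
            (fun p => ¬ p.2 < p.1), D p.1 * D p.2) :=
    (Finset.sum_filter_add_sum_filter_not _ _ _).symm
  have hgt : (univ.filter (fun p : Fin k × Fin k => ¬ p.1 < p.2)).filter (fun p => p.2 < p.1)
      = univ.filter (fun p : Fin k × Fin k => p.2 < p.1) := by
    rw [Finset.filter_filter]
    apply Finset.filter_congr
    intro p _
    constructor
    · rintro ⟨_, h⟩; exact h
    · intro h; exact ⟨not_lt_of_gt h, h⟩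
  have hdiagset : (univ.filter (fun p : Fin k × Fin k => ¬ p.1 < p.2)).filter (fun p => ¬ p.2 < p.1)
      = univ.filter (fun p : Fin k × Fin k => p.1 = p.2) := by
    rw [Finset.filter_filter]
    apply Finset.filter_congr
    intro p _
    simp only [not_lt]
    constructor
    · rintro ⟨h1, h2⟩; exact le_antisymm h2 h1
    · intro h; exact ⟨h.ge, h.le⟩
  have hdiag : (∑ p ∈ univ.filter (fun p : Fin k × Fin k => p.1 = p.2), D p.1 * D p.2)
      = ∑ i, D i ^ 2 := by
    refine Finset.sum_nbij' (i := fun p : Fin k × Fin k => p.1)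
      (j := fun i => (i, i)) ?_ ?_ ?_ ?_ ?_
    · intro p hp; exact mem_univ _
    · intro i hi; simp
    · intro p hp; simp only [mem_filter] at hp; exact Prod.ext rfl hp.2
    · intro i hi; rfl
    · intro p hp; simp only [mem_filter] at hp; show D p.1 * D p.2 = D p.1 ^ 2; rw [← hp.2]; ring
  have hswap : (∑ p ∈ univ.filter (fun p : Fin k × Fin k => p.2 < p.1), D p.1 * D p.2)
      = ∑ p ∈ univ.filter (fun p : Fin k × Fin k => p.1 < p.2), D p.1 * D p.2 := by
    refine Finset.sum_nbij' (i := fun p : Fin k × Fin k => Prod.swap p)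
      (j := fun p : Fin k × Fin k => Prod.swap p) ?_ ?_ ?_ ?_ ?_
    · intro p hp; simp only [mem_filter] at hp ⊢; exact ⟨mem_univ _, hp.2⟩
    · intro p hp; simp only [mem_filter] at hp ⊢; exact ⟨mem_univ _, hp.2⟩
    · intro p _; simp
    · intro p _; simp
    · intro p _; simp [mul_comm]
  rw [hsq, hsplit, hsplit2, hgt, hdiagset, hdiag, hswap]
  ring

theorem split_modularity_gt_unsplit_after_edge_iff
    (k : ℕ) (hk : 2 ≤ k) (M : ℝ) (hM : 0 < M)
    (D m : Fin k → ℝ) (e : Fin k → Fin k → ℝ)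
    (hD : ∀ i, 0 ≤ D i) (hm : ∀ i, 0 ≤ m i)
    (he : ∀ i j : Fin k, i < j → 0 ≤ e i j) :
    ((∑ i, m i + ∑ p ∈ univ.filter (fun p : Fin k × Fin k => p.1 < p.2), e p.1 p.2) + 1)
          / (M + 1)
        - ((∑ i, D i) + 2) ^ 2 / (4 * (M + 1) ^ 2)
      < (m ⟨0, by omega⟩ + 1) / (M + 1)
          - (D ⟨0, by omega⟩ + 2) ^ 2 / (4 * (M + 1) ^ 2)
          + ∑ i ∈ univ.erase (⟨0, by omega⟩ : Fin k),
              (m i / (M + 1) - (D i) ^ 2 / (4 * (M + 1) ^ 2))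
    ↔ ∑ p ∈ univ.filter (fun p : Fin k × Fin k => p.1 < p.2), e p.1 p.2
        < (2 * ((∑ i, D i) - D ⟨0, by omega⟩)
            + ∑ p ∈ univ.filter (fun p : Fin k × Fin k => p.1 < p.2), D p.1 * D p.2)
          / (2 * (M + 1)) := by
  have h2 : (0:ℝ) < 2 * (M + 1) := by positivity
  have h2sq : (0:ℝ) < 2 * (M + 1) ^ 2 := by positivity
  have hM1 : (M : ℝ) + 1 ≠ 0 := by positivity
  have hpair := pair_sum_identity k D
  have hEm : m ⟨0, by omega⟩ + ∑ i ∈ univ.erase (⟨0, by omega⟩ : Fin k), m i = ∑ i, m i :=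
    Finset.add_sum_erase _ _ (mem_univ _)
  have hED : D ⟨0, by omega⟩ ^ 2 + ∑ i ∈ univ.erase (⟨0, by omega⟩ : Fin k), D i ^ 2
      = ∑ i, D i ^ 2 :=
    Finset.add_sum_erase _ (fun i => D i ^ 2) (mem_univ _)
  rw [Finset.sum_sub_distrib, ← Finset.sum_div, ← Finset.sum_div]
  set E := ∑ p ∈ univ.filter (fun p : Fin k × Fin k => p.1 < p.2), e p.1 p.2 with hE
  set P := ∑ p ∈ univ.filter (fun p : Fin k × Fin k => p.1 < p.2), D p.1 * D p.2 with hP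
  set S := ∑ i, D i with hS
  set mt := ∑ i, m i with hmt
  set Q := ∑ i, D i ^ 2 with hQ
  set m0 := m ⟨0, by omega⟩ with hm0
  set D0 := D ⟨0, by omega⟩ with hD0
  set A := ∑ i ∈ univ.erase (⟨0, by omega⟩ : Fin k), m i with hA
  set B := ∑ i ∈ univ.erase (⟨0, by omega⟩ : Fin k), D i ^ 2 with hB
  have key : ((m0 + 1) / (M + 1) - (D0 + 2) ^ 2 / (4 * (M + 1) ^ 2)
        + (A / (M + 1) - B / (4 * (M + 1) ^ 2)))
      - ((mt + E + 1) / (M + 1) - (S + 2) ^ 2 / (4 * (M + 1) ^ 2))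
      = (2 * (S - D0) + P - 2 * (M + 1) * E) / (2 * (M + 1) ^ 2) := by
    field_simp
    linear_combination 8 * (M + 1) * hEm - 2 * hED - 2 * hpair
  rw [← sub_pos, key, lt_div_iff₀ h2sq, zero_mul, lt_div_iff₀ h2]
  constructor <;> intro h <;> linarith
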